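/- Convexity-weight function properties: let H(x) = √x·g(√x) on [0,r₀²] where g is odd, C¹, strictly increasing on [-1,1] with g(0)=0, and assume H is strictly convex on [0,r₀²]. Extend H by +∞ outside [0,r₀²] and set L(y) = Ĥ*(y)/y for y > 0, L(0) = 0, where Ĥ* is the convex conjugate. Then L is continuous, increasing, maps [0,∞) one-to-one onto [0,r₀²), and 0 < L(H'(r₀²)) < r₀². -/

import Mathlib

open Set Filter Topology

theorem optimal_weight_function_properties
    (r₀ : ℝ) (hr₀ : r₀ ∈ Set.Ioc (0:ℝ) 1)
    (g : ℝ → ℝ)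
    (hodd : ∀ x ∈ Set.Icc (-1:ℝ) 1, g (-x) = -g x)
    (hg0 : g 0 = 0)
    (hgC1 : ContDiffOn ℝ 1 g (Set.Icc (-1) 1))
    (hgmono : StrictMonoOn g (Set.Icc (-1) 1))
    (H H' : ℝ → ℝ)
    (hH : ∀ x ∈ Set.Icc (0:ℝ) (r₀ ^ 2), H x = Real.sqrt x * g (Real.sqrt x))
    (hconv : StrictConvexOn ℝ (Set.Icc 0 (r₀ ^ 2)) H)
    (hH'deriv : ∀ x ∈ Set.Icc (0:ℝ) (r₀ ^ 2),
      HasDerivWithinAt H (H' x) (Set.Icc 0 (r₀ ^ 2)) x)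
    (hH'0 : H' 0 = 0)
    (Hstar L : ℝ → ℝ)
    (hHstar : ∀ y, Hstar y = sSup ((fun x => x * y - H x) '' Set.Icc 0 (r₀ ^ 2)))
    (hL : ∀ y, 0 < y → L y = Hstar y / y)
    (hL0 : L 0 = 0) :
    ContinuousOn L (Set.Ici 0) ∧
    StrictMonoOn L (Set.Ici 0) ∧
    L '' Set.Ici 0 = Set.Ico 0 (r₀ ^ 2) ∧
    0 < L (H' (r₀ ^ 2)) ∧ L (H' (r₀ ^ 2)) < r₀ ^ 2 := by
  obtain ⟨hr0, hr1⟩ := hr₀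
  set r2 : ℝ := r₀ ^ 2 with hr2def
  have hr2pos : 0 < r2 := by positivity
  have hr2le1 : r2 ≤ 1 := by nlinarith
  have hH0 : H 0 = 0 := by
    rw [hH 0 ⟨le_refl 0, hr2pos.le⟩]
    simp [hg0]
  have hHc : ContinuousOn H (Icc 0 r2) := fun x hx => (hH'deriv x hx).continuousWithinAt
  have hmem11 : ∀ t : ℝ, 0 ≤ t → t ≤ 1 → t ∈ Icc (-1:ℝ) 1 := by
    intro t h1 h2; exact ⟨by linarith, h2⟩
  have hsqle1 : ∀ x : ℝ, x ≤ r2 → Real.sqrt x ≤ 1 := by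
    intro x hx
    rw [show (1:ℝ) = Real.sqrt 1 by simp]
    exact Real.sqrt_le_sqrt (le_trans hx hr2le1)
  have hHpos : ∀ x, 0 < x → x ≤ r2 → 0 < H x := by
    intro x hx hxr
    rw [hH x ⟨hx.le, hxr⟩]
    have hsx : 0 < Real.sqrt x := Real.sqrt_pos.2 hx
    have hg : 0 < g (Real.sqrt x) := by
      have := hgmono (hmem11 0 le_rfl zero_le_one)
        (hmem11 _ (Real.sqrt_nonneg x) (hsqle1 x hxr)) hsx
      rwa [hg0] at this
    positivity
  have hHmono : ∀ x₁ x₂, 0 ≤ x₁ → x₁ ≤ x₂ → x₂ ≤ r2 → H x₁ ≤ H x₂ := by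
    intro x₁ x₂ h1 h12 h2r
    rw [hH x₁ ⟨h1, le_trans h12 h2r⟩, hH x₂ ⟨le_trans h1 h12, h2r⟩]
    have hs12 : Real.sqrt x₁ ≤ Real.sqrt x₂ := Real.sqrt_le_sqrt h12
    have m1 := hmem11 _ (Real.sqrt_nonneg x₁) (hsqle1 x₁ (le_trans h12 h2r))
    have m2 := hmem11 _ (Real.sqrt_nonneg x₂) (hsqle1 x₂ h2r)
    have hg1 : 0 ≤ g (Real.sqrt x₁) := by
      have := hgmono.monotoneOn (hmem11 0 le_rfl zero_le_one) m1 (Real.sqrt_nonneg x₁)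
      rwa [hg0] at this
    exact mul_le_mul hs12 (hgmono.monotoneOn m1 m2 hs12) hg1 (Real.sqrt_nonneg x₂)
  have hHnn : ∀ x, 0 ≤ x → x ≤ r2 → 0 ≤ H x := by
    intro x h1 h2
    have := hHmono 0 x le_rfl h1 h2
    rwa [hH0] at this
  have hKne : (Icc (0:ℝ) r2).Nonempty := ⟨0, le_refl 0, hr2pos.le⟩
  have hKcpt : IsCompact (Icc (0:ℝ) r2) := isCompact_Icc
  have hfc : ∀ y : ℝ, ContinuousOn (fun x => x * y - H x) (Icc 0 r2) :=
    fun y => (continuousOn_id.mul continuousOn_const).sub hHc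
  have hbdd : ∀ y, BddAbove ((fun x => x * y - H x) '' Icc 0 r2) :=
    fun y => (hKcpt.image_of_continuousOn (hfc y)).bddAbove
  have hle : ∀ y, ∀ x, 0 ≤ x → x ≤ r2 → x * y - H x ≤ Hstar y := by
    intro y x h1 h2
    rw [hHstar y]
    exact le_csSup (hbdd y) ⟨x, ⟨h1, h2⟩, rfl⟩
  have hmem : ∀ y, ∃ x, 0 ≤ x ∧ x ≤ r2 ∧ Hstar y = x * y - H x := by
    intro y
    have := (hKcpt.image_of_continuousOn (hfc y)).sSup_mem (hKne.image _)
    rw [← hHstar y] at this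
    obtain ⟨x, hx, hxe⟩ := this
    exact ⟨x, hx.1, hx.2, hxe.symm⟩
  -- existence of small x with H x < x * y
  have hslope0 : ∀ y : ℝ, 0 < y → ∃ x, 0 < x ∧ x ≤ r2 ∧ H x < x * y := by
    intro y hy
    have hd := hH'deriv 0 ⟨le_refl 0, hr2pos.le⟩
    rw [hasDerivWithinAt_iff_tendsto_slope, hH'0] at hd
    rw [Icc_diff_left] at hd
    haveI hne : (𝓝[Ioc (0:ℝ) r2] 0).NeBot := by
      apply mem_closure_iff_nhdsWithin_neBot.1
      rw [closure_Ioc hr2pos.ne]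
      exact ⟨le_rfl, hr2pos.le⟩
    have hev : ∀ᶠ x in 𝓝[Ioc (0:ℝ) r2] 0, slope H 0 x < y :=
      hd.eventually_lt_const hy
    obtain ⟨x, hx1, hx2⟩ := (hev.and (eventually_mem_nhdsWithin)).exists
    refine ⟨x, hx2.1, hx2.2, ?_⟩
    have : slope H 0 x = H x / x := by
      rw [slope_def_field, hH0]
      ring_nf
    rw [this] at hx1
    have := (div_lt_iff₀ hx2.1).1 hx1
    linarith [this]
  have hHstarpos : ∀ y, 0 < y → 0 < Hstar y := by
    intro y hy
    obtain ⟨x, hx0, hxr, hxy⟩ := hslope0 y hy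
    have := hle y x hx0.le hxr
    linarith
  have hHstarlt : ∀ y, 0 < y → Hstar y < r2 * y := by
    intro y hy
    obtain ⟨x, hx0, hxr, he⟩ := hmem y
    rcases eq_or_lt_of_le hxr with heq | hlt
    · have := hHpos r2 hr2pos le_rfl
      rw [heq] at he
      nlinarith
    · have := hHnn x hx0 hxr
      nlinarith
  have hLpos : ∀ y, 0 < y → 0 < L y := by
    intro y hy; rw [hL y hy]; exact div_pos (hHstarpos y hy) hy
  have hLlt : ∀ y, 0 < y → L y < r2 := by
    intro y hy; rw [hL y hy, div_lt_iff₀ hy]; exact hHstarlt y hy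
  -- strict monotonicity
  have hLmono : StrictMonoOn L (Ici (0:ℝ)) := by
    intro a ha b hb hab
    have hb' : 0 < b := lt_of_le_of_lt ha hab
    rcases eq_or_lt_of_le (Set.mem_Ici.1 ha : (0:ℝ) ≤ a) with rfl | ha'
    · rw [hL0]; exact hLpos b hb'
    · obtain ⟨x₀, hx0, hxr, he⟩ := hmem a
      have hx0pos : 0 < x₀ := by
        rcases eq_or_lt_of_le hx0 with rfl | h
        · exfalso
          have := hHstarpos a ha'
          rw [he, hH0] at this
          simp at this
        · exact h
      have hHx : 0 < H x₀ := hHpos x₀ hx0pos hxr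
      have h1 : L a = x₀ - H x₀ / a := by
        rw [hL a ha', he]
        field_simp
      have h2 : x₀ - H x₀ / b ≤ L b := by
        rw [hL b hb', le_div_iff₀ hb']
        have := hle b x₀ hx0pos.le hxr
        have hbne : b ≠ 0 := hb'.ne'
        calc (x₀ - H x₀ / b) * b = x₀ * b - H x₀ := by field_simp
        _ ≤ Hstar b := this
      have h3 : H x₀ / b < H x₀ / a := div_lt_div_of_pos_left hHx ha' hab
      linarith
  -- Lipschitz-type bound for Hstar
  have hHstarLip : ∀ y₁ y₂ : ℝ, Hstar y₁ ≤ Hstar y₂ + r2 * |y₁ - y₂| := by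
    intro y₁ y₂
    obtain ⟨x, hx0, hxr, he⟩ := hmem y₁
    have h1 : x * (y₁ - y₂) ≤ r2 * |y₁ - y₂| :=
      calc x * (y₁ - y₂) ≤ x * |y₁ - y₂| :=
            mul_le_mul_of_nonneg_left (le_abs_self _) hx0
      _ ≤ r2 * |y₁ - y₂| := mul_le_mul_of_nonneg_right hxr (abs_nonneg _)
    have h2 := hle y₂ x hx0 hxr
    nlinarith
  have hHstarCont : Continuous Hstar := by
    have : LipschitzWith (Real.toNNReal r2) Hstar := by
      apply LipschitzWith.of_dist_le_mul
      intro y₁ y₂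
      rw [Real.dist_eq, Real.dist_eq, Real.coe_toNNReal r2 hr2pos.le]
      refine abs_sub_le_iff.2 ⟨?_, ?_⟩
      · have := hHstarLip y₁ y₂; linarith
      · have := hHstarLip y₂ y₁
        rw [abs_sub_comm] at this
        linarith
    exact this.continuous
  -- continuity of L on [0, ∞)
  have hLcont : ContinuousOn L (Ici (0:ℝ)) := by
    intro y hy
    rcases eq_or_lt_of_le (Set.mem_Ici.1 hy : (0:ℝ) ≤ y) with rfl | hy'
    · rw [ContinuousWithinAt, hL0]
      rw [Metric.tendsto_nhdsWithin_nhds]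
      intro ε hε
      set ε₁ : ℝ := min (ε/2) (r2/2) with hε₁def
      have hε₁pos : 0 < ε₁ := lt_min (by linarith) (by linarith)
      have hε₁r2 : ε₁ ≤ r2/2 := min_le_right _ _
      have hε₁ε : ε₁ < ε := lt_of_le_of_lt (min_le_left _ _) (by linarith)
      have hHε₁ : 0 < H ε₁ := hHpos ε₁ hε₁pos (by linarith)
      refine ⟨H ε₁ / r2, div_pos hHε₁ hr2pos, ?_⟩
      intro z hz hzd
      rcases eq_or_lt_of_le (Set.mem_Ici.1 hz : (0:ℝ) ≤ z) with rfl | hz'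
      · rw [hL0]; simpa using hε
      · rw [Real.dist_eq, sub_zero] at hzd
        rw [abs_of_pos hz'] at hzd
        have hzb : r2 * z < H ε₁ := by
          rw [lt_div_iff₀ hr2pos] at hzd
          linarith
        have hub : Hstar z ≤ ε₁ * z := by
          obtain ⟨x, hx0, hxr, he⟩ := hmem z
          rcases le_or_gt x ε₁ with hcase | hcase
          · have := hHnn x hx0 hxr
            rw [he]
            nlinarith
          · have hHx : H ε₁ ≤ H x := hHmono ε₁ x hε₁pos.le hcase.le hxr
            have : x * z ≤ r2 * z := mul_le_mul_of_nonneg_right hxr hz'.le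
            rw [he]
            nlinarith
        have hLz : L z ≤ ε₁ := by
          rw [hL z hz', div_le_iff₀ hz']
          linarith
        rw [Real.dist_eq, sub_zero, abs_of_pos (hLpos z hz')]
        linarith
    · have hCA : ContinuousAt L y := by
        have hbase : ContinuousAt (fun z => Hstar z / z) y :=
          ContinuousAt.div hHstarCont.continuousAt continuousAt_id hy'.ne'
        apply hbase.congr
        filter_upwards [Ioi_mem_nhds hy'] with z hz
        exact (hL z hz).symm
      exact hCA.continuousWithinAt
  -- values exceeding any c < r2
  have hLub : ∀ c : ℝ, 0 < c → c < r2 → ∃ Y, 0 < Y ∧ c < L Y := by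
    intro c hc hcr
    have hHr2 : 0 < H r2 := hHpos r2 hr2pos le_rfl
    have hrc : 0 < r2 - c := by linarith
    set Y : ℝ := H r2 / (r2 - c) + 1 with hYdef
    have hY : 0 < Y := by positivity
    refine ⟨Y, hY, ?_⟩
    have h1 : r2 * Y - H r2 ≤ Hstar Y := hle Y r2 hr2pos.le le_rfl
    rw [hL Y hY, lt_div_iff₀ hY]
    have hfrac : H r2 / (r2 - c) < Y := by
      rw [hYdef]; linarith
    have h2 : H r2 < (r2 - c) * Y := by
      rw [div_lt_iff₀ hrc] at hfrac
      linarith [hfrac]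
    nlinarith
  have himg : L '' Ici 0 = Ico 0 r2 := by
    apply Subset.antisymm
    · rintro _ ⟨y, hy, rfl⟩
      rcases eq_or_lt_of_le (Set.mem_Ici.1 hy : (0:ℝ) ≤ y) with rfl | hy'
      · rw [hL0]; exact ⟨le_rfl, hr2pos⟩
      · exact ⟨(hLpos y hy').le, hLlt y hy'⟩
    · rintro c ⟨hc0, hcr⟩
      rcases eq_or_lt_of_le hc0 with rfl | hc'
      · exact ⟨0, self_mem_Ici, hL0⟩
      · obtain ⟨Y, hY, hcY⟩ := hLub c hc' hcr
        have hIVT := intermediate_value_Icc hY.le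
          (hLcont.mono (Icc_subset_Ici_self : Icc 0 Y ⊆ Ici 0))
        have hcmem : c ∈ Icc (L 0) (L Y) := ⟨by rw [hL0]; exact hc0, hcY.le⟩
        obtain ⟨y, hy, hye⟩ := hIVT hcmem
        exact ⟨y, hy.1, hye⟩
  -- H' r2 > 0
  have hH'r2 : 0 < H' r2 := by
    have hd := hH'deriv r2 ⟨hr2pos.le, le_rfl⟩
    rw [hasDerivWithinAt_iff_tendsto_slope, Icc_sdiff_right] at hd
    haveI hne : (𝓝[Ico (0:ℝ) r2] r2).NeBot := by
      apply mem_closure_iff_nhdsWithin_neBot.1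
      rw [closure_Ico hr2pos.ne]
      exact ⟨hr2pos.le, le_rfl⟩
    have hbound : ∀ x ∈ Ico (0:ℝ) r2, H r2 / r2 ≤ slope H r2 x := by
      intro x hx
      have hsec := hconv.convexOn.secant_mono (a := r2) (x := 0) (y := x)
        ⟨hr2pos.le, le_rfl⟩ ⟨le_rfl, hr2pos.le⟩ ⟨hx.1, hx.2.le⟩
        hr2pos.ne hx.2.ne hx.1
      rw [slope_def_field]
      have heq : (H 0 - H r2) / (0 - r2) = H r2 / r2 := by
        rw [hH0]
        field_simp
        rw [div_eq_iff (sub_ne_zero.2 hr2pos.ne)]; ring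
      linarith [hsec, heq.symm.le, heq.le]
    have h1 : H r2 / r2 ≤ H' r2 :=
      ge_of_tendsto hd (eventually_nhdsWithin_of_forall hbound)
    have h2 : 0 < H r2 / r2 := div_pos (hHpos r2 hr2pos le_rfl) hr2pos
    linarith
  exact ⟨hLcont, hLmono, himg, hLpos _ hH'r2, hLlt _ hH'r2⟩
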